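/- Let σ ∈ S_n contain a bond (a, a+1) in adjacent positions, with the value a+1 immediately followed by a−1 (so σ contains consecutive entries a, a+1, a−1, i.e., a+1 is a vertical separator via this configuration), and suppose moreover every digit of σ is a separator. Then a contradiction follows; i.e., no permutation all of whose digits are separators contains the consecutive pattern a, a+1 with a+1 a vertical separator. -/

import Mathlib

/-- The entry at position `k` of `σ` (0-indexed) is a *vertical separator*:
there are positions `j, j+1, j+2` with `k = j+1` and `|σ j - σ (j+2)| = 1`. -/
def IsVSepPos {n : ℕ} (σ : Equiv.Perm (Fin n)) (k : Fin n) : Prop :=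
  ∃ (j : ℕ) (h : j + 2 < n), (k : ℕ) = j + 1 ∧
    (((σ ⟨j, by omega⟩).val : ℤ) - ((σ ⟨j + 2, h⟩).val : ℤ)).natAbs = 1

/-- The value `b` is a vertical separator of `σ`. -/
def IsVSepVal {n : ℕ} (σ : Equiv.Perm (Fin n)) (b : Fin n) : Prop :=
  IsVSepPos σ (σ⁻¹ b)

/-- The value `a` is a *horizontal separator* of `σ`: the values `a-1` and `a+1`
occupy adjacent positions of `σ` (their sum is `2a` and they differ by `2`). -/
def IsHSepVal {n : ℕ} (σ : Equiv.Perm (Fin n)) (a : Fin n) : Prop :=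
  ∃ (j : ℕ) (h : j + 1 < n),
    (((σ ⟨j, by omega⟩).val : ℤ) - ((σ ⟨j + 1, h⟩).val : ℤ)).natAbs = 2 ∧
    ((σ ⟨j, by omega⟩).val : ℤ) + ((σ ⟨j + 1, h⟩).val : ℤ) = 2 * (a : ℤ)

/-- `σ` has a bond at positions `j, j+1`. -/
def PermBondAt {n : ℕ} (σ : Equiv.Perm (Fin n)) (j : ℕ) (h : j + 1 < n) : Prop :=
  (((σ ⟨j, by omega⟩).val : ℤ) - ((σ ⟨j + 1, h⟩).val : ℤ)).natAbs = 1

/-- The sequence obtained from `σ` by deleting the entry at position `p`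
and standardizing. -/
def delSeq {n : ℕ} (σ : Equiv.Perm (Fin n)) (p : Fin n) : Fin (n - 1) → ℕ :=
  fun k =>
    let q : Fin n :=
      if (k : ℕ) < (p : ℕ) then ⟨k, by have := k.isLt; omega⟩
      else ⟨(k : ℕ) + 1, by have := k.isLt; omega⟩
    if (σ q).val < (σ p).val then (σ q).val else (σ q).val - 1

/-- A sequence has a bond at positions `j, j+1`. -/
def SeqBondAt {m : ℕ} (g : Fin m → ℕ) (j : ℕ) (h : j + 1 < m) : Prop :=
  ((g ⟨j, by omega⟩ : ℤ) - (g ⟨j + 1, h⟩ : ℤ)).natAbs = 1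

/-- The number of bonds of a sequence. -/
noncomputable def seqBondCount {m : ℕ} (g : Fin m → ℕ) : ℕ :=
  Nat.card {p : Fin m × Fin m //
    (p.2 : ℕ) = (p.1 : ℕ) + 1 ∧ ((g p.1 : ℤ) - (g p.2 : ℤ)).natAbs = 1}

/-- The number of bonds of `σ`. -/
noncomputable def bondCount {n : ℕ} (σ : Equiv.Perm (Fin n)) : ℕ :=
  Nat.card {p : Fin n × Fin n //
    (p.2 : ℕ) = (p.1 : ℕ) + 1 ∧ (((σ p.1).val : ℤ) - ((σ p.2).val : ℤ)).natAbs = 1}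


private def Fv {n : ℕ} (σ : Equiv.Perm (Fin n)) (p : ℕ) : ℤ :=
  if hp : p < n then ((σ ⟨p, hp⟩).val : ℤ) else -1

private lemma Fv_eq {n : ℕ} (σ : Equiv.Perm (Fin n)) {p : ℕ} (hp : p < n) :
    Fv σ p = ((σ ⟨p, hp⟩).val : ℤ) := dif_pos hp

private lemma Fv_inj {n : ℕ} (σ : Equiv.Perm (Fin n)) {p q : ℕ} (hp : p < n) (hq : q < n)
    (hpq : Fv σ p = Fv σ q) : p = q := by
  rw [Fv_eq σ hp, Fv_eq σ hq] at hpq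
  have h2 : σ ⟨p, hp⟩ = σ ⟨q, hq⟩ := Fin.ext (by exact_mod_cast hpq)
  exact congrArg Fin.val (σ.injective h2)

private lemma vsep_use {n : ℕ} (σ : Equiv.Perm (Fin n)) {p : ℕ} (hp : p < n)
    (hv : IsVSepVal σ (σ ⟨p, hp⟩)) :
    ∃ q : ℕ, p = q + 1 ∧ q + 2 < n ∧ (Fv σ q - Fv σ (q + 2)).natAbs = 1 := by
  have h' : IsVSepPos σ (σ⁻¹ (σ ⟨p, hp⟩)) := hv
  rw [show σ⁻¹ (σ ⟨p, hp⟩) = ⟨p, hp⟩ from σ.symm_apply_apply _] at h'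
  obtain ⟨q, hq, he, hd⟩ := h'
  refine ⟨q, he, hq, ?_⟩
  rw [Fv_eq σ (show q < n by omega), Fv_eq σ hq]
  exact hd

private lemma hsep_use {n : ℕ} (σ : Equiv.Perm (Fin n)) {p : ℕ} (hp : p < n)
    (hh : IsHSepVal σ (σ ⟨p, hp⟩)) :
    ∃ q : ℕ, q + 1 < n ∧
      ((Fv σ q = Fv σ p - 1 ∧ Fv σ (q + 1) = Fv σ p + 1) ∨
       (Fv σ q = Fv σ p + 1 ∧ Fv σ (q + 1) = Fv σ p - 1)) := by
  obtain ⟨q, hq, hd, hs⟩ := hh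
  have hd' : (Fv σ q - Fv σ (q + 1)).natAbs = 2 := by
    rw [Fv_eq σ (show q < n by omega), Fv_eq σ hq]; exact hd
  have hs' : Fv σ q + Fv σ (q + 1) = 2 * Fv σ p := by
    rw [Fv_eq σ (show q < n by omega), Fv_eq σ hq, Fv_eq σ hp]; exact_mod_cast hs
  exact ⟨q, hq, by omega⟩

/-- no permutation all of whose digits are separators contains
three consecutive entries `a, a+1, a-1` (a bond `(a, a+1)` whose right element
is a vertical separator). -/
theorem stmt10 {n : ℕ} (σ : Equiv.Perm (Fin n))
    (hsep : ∀ b : Fin n, IsVSepVal σ b ∨ IsHSepVal σ b)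
    (j : ℕ) (h : j + 2 < n)
    (h1 : ((σ ⟨j + 1, by omega⟩).val : ℤ) = ((σ ⟨j, by omega⟩).val : ℤ) + 1)
    (h2 : ((σ ⟨j + 2, h⟩).val : ℤ) = ((σ ⟨j, by omega⟩).val : ℤ) - 1) :
    False := by
  have hjn : j < n := by omega
  have f1 : Fv σ (j + 1) = Fv σ j + 1 := by
    rw [Fv_eq σ (show j + 1 < n by omega), Fv_eq σ hjn]; exact h1
  have f2 : Fv σ (j + 2) = Fv σ j - 1 := by
    rw [Fv_eq σ h, Fv_eq σ hjn]; exact h2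
  by_cases hB : ∃ q : ℕ, q + 1 = j ∧ Fv σ q = Fv σ j - 2
  · -- Case B : the value a-2 sits immediately left of a
    obtain ⟨m, hmj, fB⟩ := hB
    have keyB : ∀ T : ℕ, T + 1 ≤ j ∧ j + 3 + T < n ∧
        Fv σ (j - T) = Fv σ j - 2 * (T : ℤ) ∧
        Fv σ (j + 2 + T) = Fv σ j - 1 - 2 * (T : ℤ) ∧
        Fv σ (j - 1 - T) = Fv σ j - 2 - 2 * (T : ℤ) ∧
        Fv σ (j + 3 + T) = Fv σ j - 3 - 2 * (T : ℤ) := by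
      intro T
      induction T with
      | zero =>
        have hmn : m < n := by omega
        have key : j + 3 < n ∧ Fv σ (j + 3) = Fv σ j - 3 := by
          rcases hsep (σ ⟨m, hmn⟩) with hv | hh
          · obtain ⟨q, hq1, hq2, hq3⟩ := vsep_use σ hmn hv
            rw [(by omega : q + 2 = j)] at hq3
            have hqn : q < n := by omega
            have hc : Fv σ q = Fv σ j - 1 ∨ Fv σ q = Fv σ j + 1 := by omega
            rcases hc with hc | hc
            · have := Fv_inj σ hqn h (by rw [hc, f2])
              omega
            · have := Fv_inj σ hqn (show j + 1 < n by omega) (by rw [hc, f1])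
              omega
          · obtain ⟨q, hqn, hc⟩ := hsep_use σ hmn hh
            rw [fB] at hc
            rcases hc with ⟨hc1, hc2⟩ | ⟨hc1, hc2⟩
            · have e := Fv_inj σ (show q + 1 < n by omega) h (by rw [hc2, f2]; ring)
              rw [(by omega : q = j + 1)] at hc1
              exfalso; omega
            · have e := Fv_inj σ (show q < n by omega) h (by rw [hc1, f2]; ring)
              rw [(by omega : q + 1 = j + 3)] at hc2
              exact ⟨by omega, by omega⟩
        obtain ⟨kn, kf⟩ := key
        refine ⟨by omega, by omega, ?_, ?_, ?_, ?_⟩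
        · rw [Nat.sub_zero]; omega
        · rw [Nat.add_zero]; omega
        · rw [Nat.sub_zero, (by omega : j - 1 = m)]; omega
        · rw [Nat.add_zero]; omega
      | succ T ih =>
        obtain ⟨hTj, hTn, g1, g2, g3, g4⟩ := ih
        have step1 : T + 2 ≤ j ∧ Fv σ (j - 2 - T) = Fv σ j - 4 - 2 * (T : ℤ) := by
          rcases hsep (σ ⟨j + 3 + T, hTn⟩) with hv | hh
          · obtain ⟨q, hq1, hq2, hq3⟩ := vsep_use σ hTn hv
            rw [(by omega : q = j + 2 + T), (by omega : j + 2 + T + 2 = j + 4 + T), g2] at hq3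
            have h4n : j + 4 + T < n := by omega
            have hc : Fv σ (j + 4 + T) = Fv σ j - 2 * (T : ℤ) ∨
                Fv σ (j + 4 + T) = Fv σ j - 2 - 2 * (T : ℤ) := by omega
            rcases hc with hc | hc
            · have := Fv_inj σ h4n (show j - T < n by omega) (by rw [hc, g1])
              omega
            · have := Fv_inj σ h4n (show j - 1 - T < n by omega) (by rw [hc, g3])
              omega
          · obtain ⟨q, hqn, hc⟩ := hsep_use σ hTn hh
            rw [g4] at hc
            rcases hc with ⟨hc1, hc2⟩ | ⟨hc1, hc2⟩
            · have e := Fv_inj σ (show q + 1 < n by omega) (show j - 1 - T < n by omega)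
                (by rw [hc2, g3]; ring)
              have hj2 : T + 2 ≤ j := by omega
              rw [(by omega : q = j - 2 - T)] at hc1
              exact ⟨hj2, by omega⟩
            · have e := Fv_inj σ (show q < n by omega) (show j - 1 - T < n by omega)
                (by rw [hc1, g3]; ring)
              rw [(by omega : q + 1 = j - T)] at hc2
              exfalso; omega
        obtain ⟨hj2, n1⟩ := step1
        have h2n : j - 2 - T < n := by omega
        have step2 : j + 4 + T < n ∧ Fv σ (j + 4 + T) = Fv σ j - 5 - 2 * (T : ℤ) := by
          rcases hsep (σ ⟨j - 2 - T, h2n⟩) with hv | hh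
          · obtain ⟨q, hq1, hq2, hq3⟩ := vsep_use σ h2n hv
            rw [(by omega : q + 2 = j - 1 - T), g3] at hq3
            have hqn : q < n := by omega
            have hc : Fv σ q = Fv σ j - 1 - 2 * (T : ℤ) ∨
                Fv σ q = Fv σ j - 3 - 2 * (T : ℤ) := by omega
            rcases hc with hc | hc
            · have := Fv_inj σ hqn (show j + 2 + T < n by omega) (by rw [hc, g2])
              omega
            · have := Fv_inj σ hqn (show j + 3 + T < n by omega) (by rw [hc, g4])
              omega
          · obtain ⟨q, hqn, hc⟩ := hsep_use σ h2n hh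
            rw [n1] at hc
            rcases hc with ⟨hc1, hc2⟩ | ⟨hc1, hc2⟩
            · have e := Fv_inj σ (show q + 1 < n by omega) (show j + 3 + T < n by omega)
                (by rw [hc2, g4]; ring)
              rw [(by omega : q = j + 2 + T)] at hc1
              exfalso; omega
            · have e := Fv_inj σ (show q < n by omega) (show j + 3 + T < n by omega)
                (by rw [hc1, g4]; ring)
              rw [(by omega : q + 1 = j + 4 + T)] at hc2
              exact ⟨by omega, by omega⟩
        obtain ⟨h4n, n2⟩ := step2
        refine ⟨by omega, by omega, ?_, ?_, ?_, ?_⟩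
        · rw [(by omega : j - (T + 1) = j - 1 - T)]; push_cast; omega
        · rw [(by omega : j + 2 + (T + 1) = j + 3 + T)]; push_cast; omega
        · rw [(by omega : j - 1 - (T + 1) = j - 2 - T)]; push_cast; omega
        · rw [(by omega : j + 3 + (T + 1) = j + 4 + T)]; push_cast; omega
    have := (keyB j).1
    omega
  · -- Case A : the chain marches to the right
    have keyA : ∀ k : ℕ, j + 2 * k + 2 < n ∧
        (∀ m : ℕ, m + 1 = k → Fv σ (j + 2 * m + 1) = Fv σ j + 1 + (m : ℤ)) ∧
        Fv σ (j + 2 * k) = Fv σ j - (k : ℤ) ∧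
        Fv σ (j + 2 * k + 1) = Fv σ j + 1 + (k : ℤ) ∧
        Fv σ (j + 2 * k + 2) = Fv σ j - 1 - (k : ℤ) := by
      intro k
      induction k with
      | zero =>
        refine ⟨by omega, fun m hm => absurd hm (by omega), ?_, ?_, ?_⟩
        · rw [(by omega : j + 2 * 0 = j)]; omega
        · rw [(by omega : j + 2 * 0 + 1 = j + 1)]; omega
        · rw [(by omega : j + 2 * 0 + 2 = j + 2)]; omega
      | succ k ih =>
        obtain ⟨hn2, hm1, g0, g1, g2⟩ := ih
        have taken : ∃ r : ℕ, r < n ∧ r ≤ j + 2 * k ∧ Fv σ r = Fv σ j + (k : ℤ) := by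
          obtain rfl | ⟨m, rfl⟩ : k = 0 ∨ ∃ m, k = m + 1 := by rcases k with _ | m; exacts [Or.inl rfl, Or.inr ⟨m, rfl⟩]
          · exact ⟨j, by omega, by omega, by push_cast; ring⟩
          · refine ⟨j + 2 * m + 1, by omega, by omega, ?_⟩
            rw [hm1 m rfl]; push_cast; ring
        obtain ⟨r, hrn, hrb, hr⟩ := taken
        have step1 : j + 2 * k + 3 < n ∧ Fv σ (j + 2 * k + 3) = Fv σ j + 2 + (k : ℤ) := by
          rcases hsep (σ ⟨j + 2 * k + 2, hn2⟩) with hv | hh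
          · obtain ⟨q, hq1, hq2, hq3⟩ := vsep_use σ hn2 hv
            rw [(by omega : q = j + 2 * k + 1), (by omega : j + 2 * k + 1 + 2 = j + 2 * k + 3),
              g1] at hq3
            have hc : Fv σ (j + 2 * k + 3) = Fv σ j + (k : ℤ) ∨
                Fv σ (j + 2 * k + 3) = Fv σ j + 2 + (k : ℤ) := by omega
            rcases hc with hc | hc
            · have := Fv_inj σ (show j + 2 * k + 3 < n by omega) hrn (by rw [hc, hr])
              omega
            · exact ⟨by omega, hc⟩
          · obtain ⟨q, hqn, hc⟩ := hsep_use σ hn2 hh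
            rw [g2] at hc
            rcases hc with ⟨hc1, hc2⟩ | ⟨hc1, hc2⟩
            · have e := Fv_inj σ (show q + 1 < n by omega) (show j + 2 * k < n by omega)
                (by rw [hc2, g0]; ring)
              obtain rfl | ⟨m, rfl⟩ : k = 0 ∨ ∃ m, k = m + 1 := by rcases k with _ | m; exacts [Or.inl rfl, Or.inr ⟨m, rfl⟩]
              · exact absurd ⟨q, by omega, by push_cast at hc1 ⊢; omega⟩ hB
              · rw [(by omega : q = j + 2 * m + 1)] at hc1
                have := hm1 m rfl
                exfalso; push_cast at hc1 this; omega
            · have e := Fv_inj σ (show q < n by omega) (show j + 2 * k < n by omega)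
                (by rw [hc1, g0]; ring)
              rw [(by omega : q + 1 = j + 2 * k + 1)] at hc2
              exfalso; omega
        obtain ⟨h3n, g3⟩ := step1
        have step2 : j + 2 * k + 4 < n ∧ Fv σ (j + 2 * k + 4) = Fv σ j - 2 - (k : ℤ) := by
          rcases hsep (σ ⟨j + 2 * k + 3, h3n⟩) with hv | hh
          · obtain ⟨q, hq1, hq2, hq3⟩ := vsep_use σ h3n hv
            rw [(by omega : q = j + 2 * k + 2), (by omega : j + 2 * k + 2 + 2 = j + 2 * k + 4),
              g2] at hq3
            have hc : Fv σ (j + 2 * k + 4) = Fv σ j - (k : ℤ) ∨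
                Fv σ (j + 2 * k + 4) = Fv σ j - 2 - (k : ℤ) := by omega
            rcases hc with hc | hc
            · have := Fv_inj σ (show j + 2 * k + 4 < n by omega) (show j + 2 * k < n by omega)
                (by rw [hc, g0])
              omega
            · exact ⟨by omega, hc⟩
          · obtain ⟨q, hqn, hc⟩ := hsep_use σ h3n hh
            rw [g3] at hc
            rcases hc with ⟨hc1, hc2⟩ | ⟨hc1, hc2⟩
            · have e := Fv_inj σ (show q < n by omega) (show j + 2 * k + 1 < n by omega)
                (by rw [hc1, g1]; ring)
              rw [(by omega : q + 1 = j + 2 * k + 2)] at hc2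
              exfalso; omega
            · have e := Fv_inj σ (show q + 1 < n by omega) (show j + 2 * k + 1 < n by omega)
                (by rw [hc2, g1]; ring)
              rw [(by omega : q = j + 2 * k)] at hc1
              exfalso; omega
        obtain ⟨h4n, g4⟩ := step2
        refine ⟨by omega, ?_, ?_, ?_, ?_⟩
        · intro m hm
          obtain rfl : m = k := by omega
          exact g1
        · rw [(by omega : j + 2 * (k + 1) = j + 2 * k + 2)]; push_cast; omega
        · rw [(by omega : j + 2 * (k + 1) + 1 = j + 2 * k + 3)]; push_cast; omega
        · rw [(by omega : j + 2 * (k + 1) + 2 = j + 2 * k + 4)]; push_cast; omega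
    have := (keyA n).1
    omega
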